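/- In a connected weighted graph, the effective resistance between any two distinct vertices u and v satisfies R(u,v) >= (1/2)(1/d_u + 1/d_v), where d_u, d_v are the weighted degrees of u and v. -/

import Mathlib

open Matrix BigOperators

/-- in a connected weighted graph, the effective resistance
`R(u,v) = (1_u - 1_v)ᵀ L⁺ (1_u - 1_v)` between distinct vertices `u, v` satisfies
`R(u,v) ≥ (1/2)(1/d_u + 1/d_v)`.  The pseudoinverse `L⁺` is characterized by the
Moore–Penrose axioms. -/
theorem effective_resistance_lower_bound (n : ℕ) (A : Matrix (Fin n) (Fin n) ℝ)
    (hsym : A.IsSymm) (hnonneg : ∀ i j, 0 ≤ A i j) (hloop : ∀ i, A i i = 0)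
    (hdpos : ∀ i, 0 < ∑ j, A i j)
    (L : Matrix (Fin n) (Fin n) ℝ)
    (hL : L = Matrix.diagonal (fun i => ∑ j, A i j) - A)
    (hconn : ∀ x : Fin n → ℝ, L.mulVec x = 0 → ∃ c : ℝ, ∀ i, x i = c)
    (Lp : Matrix (Fin n) (Fin n) ℝ)
    (hmp1 : L * Lp * L = L) (hmp2 : Lp * L * Lp = Lp)
    (hmp3 : (L * Lp).IsSymm) (hmp4 : (Lp * L).IsSymm)
    (u v : Fin n) (huv : u ≠ v) :
    (1 / 2) * (1 / (∑ j, A u j) + 1 / (∑ j, A v j))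
      ≤ (Pi.single u 1 - Pi.single v 1) ⬝ᵥ
          Lp.mulVec (Pi.single u 1 - Pi.single v 1) := by
  -- basic facts about L
  have hLs : Lᵀ = L := by
    rw [hL, Matrix.transpose_sub, Matrix.diagonal_transpose, hsym.eq]
  have hcol : ∀ j, ∑ i, L i j = 0 := by
    intro j
    simp only [hL, Matrix.sub_apply, Matrix.diagonal_apply, Finset.sum_sub_distrib]
    rw [Finset.sum_ite_eq' Finset.univ j (fun i => ∑ k, A i k)]
    have : ∑ i, A i j = ∑ i, A j i := Finset.sum_congr rfl fun i _ => (hsym.apply j i)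
    simp [this]
  have hsum0 : ∀ z : Fin n → ℝ, ∑ i, L.mulVec z i = 0 := by
    intro z
    simp only [Matrix.mulVec, dotProduct]
    rw [Finset.sum_comm]
    refine Finset.sum_eq_zero fun j _ => ?_
    rw [← Finset.sum_mul, hcol j, zero_mul]
  -- L is positive semidefinite
  have hPSD : ∀ z : Fin n → ℝ, 0 ≤ z ⬝ᵥ L.mulVec z := by
    intro z
    have hq : z ⬝ᵥ L.mulVec z
        = ∑ i, (∑ j, A i j) * z i ^ 2 - ∑ i, ∑ j, A i j * z i * z j := by
      simp only [hL, dotProduct, Matrix.mulVec, Matrix.sub_apply,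
        Matrix.diagonal_apply]
      rw [← Finset.sum_sub_distrib]
      congr 1; funext i
      rw [Finset.mul_sum]
      have h1 : ∀ j, z i * (((if i = j then ∑ k, A i k else 0) - A i j) * z j)
          = (if j = i then (∑ k, A i k) * z i ^ 2 else 0) - A i j * z i * z j := by
        intro j; by_cases h : i = j
        · subst h; simp; ring
        · simp [h, Ne.symm h]; ring
      simp only [h1, Finset.sum_sub_distrib, Finset.sum_ite_eq' Finset.univ i,
        Finset.mem_univ, if_true]
    have hexp : ∑ i, ∑ j, A i j * (z i - z j) ^ 2
        = 2 * (∑ i, (∑ j, A i j) * z i ^ 2) - 2 * (∑ i, ∑ j, A i j * z i * z j) := by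
      have h1 : ∀ i j, A i j * (z i - z j) ^ 2
          = A i j * z i ^ 2 + A i j * z j ^ 2 - 2 * (A i j * z i * z j) := by
        intro i j; ring
      simp only [h1, Finset.sum_sub_distrib, Finset.sum_add_distrib, ← Finset.mul_sum]
      have hT1 : ∀ i, ∑ j, A i j * z i ^ 2 = (∑ j, A i j) * z i ^ 2 := by
        intro i; rw [Finset.sum_mul]
      have hT2 : ∑ i, ∑ j, A i j * z j ^ 2 = ∑ i, (∑ j, A i j) * z i ^ 2 := by
        rw [Finset.sum_comm]
        refine Finset.sum_congr rfl fun j _ => ?_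
        rw [Finset.sum_mul]
        exact Finset.sum_congr rfl fun i _ => by rw [hsym.apply j i]
      simp only [hT1, hT2]
      ring
    have hnn : 0 ≤ ∑ i, ∑ j, A i j * (z i - z j) ^ 2 := by
      refine Finset.sum_nonneg fun i _ => Finset.sum_nonneg fun j _ => ?_
      exact mul_nonneg (hnonneg i j) (sq_nonneg _)
    linarith [hnn, hexp, hq]
  -- the projection L * Lp fixes b
  have hproj : L * (L * Lp) = L := by
    have h1 : (L * Lp * L)ᵀ = Lᵀ * (L * Lp)ᵀ := Matrix.transpose_mul _ _
    rw [hmp1, hmp3.eq, hLs] at h1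
    exact h1.symm
  set du : ℝ := ∑ j, A u j with hdu
  set dv : ℝ := ∑ j, A v j with hdv
  set aa : ℝ := 1 / (2 * du) with ha
  set cc : ℝ := 1 / (2 * dv) with hc
  set b : Fin n → ℝ := Pi.single u 1 - Pi.single v 1 with hb
  have hPb : (L * Lp).mulVec b = b := by
    set w : Fin n → ℝ := b - (L * Lp).mulVec b with hw
    have hker : L.mulVec w = 0 := by
      rw [hw, Matrix.mulVec_sub, Matrix.mulVec_mulVec, hproj, sub_self]
    obtain ⟨c, hcc2⟩ := hconn w hker
    have hsumb : ∑ i, b i = 0 := by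
      simp [hb, Pi.sub_apply, Finset.sum_sub_distrib, Pi.single_apply]
    have hsumw : ∑ i, w i = 0 := by
      have h2 : (L * Lp).mulVec b = L.mulVec (Lp.mulVec b) := by
        rw [Matrix.mulVec_mulVec]
      simp only [hw, Pi.sub_apply, Finset.sum_sub_distrib, hsumb, h2, hsum0]
      ring
    have hc0 : c = 0 := by
      have h3 : ∑ _i : Fin n, c = 0 := by
        rw [← hsumw]; exact Finset.sum_congr rfl fun i _ => (hcc2 i).symm
      rw [Finset.sum_const, Finset.card_univ, Fintype.card_fin, nsmul_eq_mul] at h3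
      have hn : (0:ℝ) < n := by exact_mod_cast u.pos
      exact (mul_eq_zero.mp h3).resolve_left (ne_of_gt hn)
    have hw0 : w = 0 := funext fun i => by rw [hcc2 i, hc0]; simp
    have := sub_eq_zero.mp (hw ▸ hw0)
    exact this.symm
  -- test vector x
  set x : Fin n → ℝ := Pi.single u aa - Pi.single v cc with hx
  set y : Fin n → ℝ := Lp.mulVec b with hy
  have hLy : L.mulVec y = b := by
    rw [hy, Matrix.mulVec_mulVec, hPb]
  -- expand the PSD inequality for x - y
  have h0 : 0 ≤ (x - y) ⬝ᵥ L.mulVec (x - y) := hPSD _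
  have e1 : ∀ p q : Fin n → ℝ, (p - q) ⬝ᵥ L.mulVec (p - q)
      = p ⬝ᵥ L.mulVec p - q ⬝ᵥ L.mulVec p - (p ⬝ᵥ L.mulVec q - q ⬝ᵥ L.mulVec q) := by
    intro p q
    rw [Matrix.mulVec_sub, dotProduct_sub, sub_dotProduct,
      sub_dotProduct]
  have e2 : y ⬝ᵥ L.mulVec x = x ⬝ᵥ b := by
    rw [Matrix.dotProduct_mulVec, ← Matrix.mulVec_transpose, hLs, hLy,
      dotProduct_comm]
  have e3 : x ⬝ᵥ L.mulVec y = x ⬝ᵥ b := by rw [hLy]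
  have e4 : y ⬝ᵥ L.mulVec y = b ⬝ᵥ y := by rw [hLy, dotProduct_comm]
  rw [e1 x y, e2, e3, e4] at h0
  -- compute the dot products involving x
  have hxb : x ⬝ᵥ b = aa + cc := by
    simp [hx, hb, sub_dotProduct, dotProduct_sub,
      single_dotProduct, Pi.sub_apply, Pi.single_apply, huv, huv.symm]
  have hLuu : L u u = du := by
    simp [hL, Matrix.sub_apply, Matrix.diagonal_apply_eq, hloop u, hdu]
  have hLvv : L v v = dv := by
    simp [hL, Matrix.sub_apply, Matrix.diagonal_apply_eq, hloop v, hdv]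
  have hLuv : L u v = -A u v := by
    simp [hL, Matrix.sub_apply, Matrix.diagonal_apply_ne _ huv]
  have hLvu : L v u = -A u v := by
    simp [hL, Matrix.sub_apply, Matrix.diagonal_apply_ne _ huv.symm,
      ← hsym.apply u v]
  have hxLx : x ⬝ᵥ L.mulVec x = du * aa ^ 2 + dv * cc ^ 2 + 2 * A u v * (aa * cc) := by
    rw [hx, Matrix.mulVec_sub, Matrix.mulVec_single, Matrix.mulVec_single]
    simp only [sub_dotProduct, dotProduct_sub,
      single_dotProduct, Pi.sub_apply, Pi.smul_apply, op_smul_eq_mul, Matrix.col_apply]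
    rw [hLuu, hLvv, hLuv, hLvu]
    ring
  rw [hxb, hxLx] at h0
  -- final arithmetic
  have hdu0 : 0 < du := hdpos u
  have hdv0 : 0 < dv := hdpos v
  have hA1 : A u v ≤ du :=
    Finset.single_le_sum (fun j _ => hnonneg u j) (Finset.mem_univ v)
  have hA2 : A u v ≤ dv := by
    rw [← hsym.apply u v]
    exact Finset.single_le_sum (fun j _ => hnonneg v j) (Finset.mem_univ u)
  have harith : (1/2)*(1/du + 1/dv) ≤ 2*(aa + cc)
      - (du * aa ^ 2 + dv * cc ^ 2 + 2 * A u v * (aa * cc)) := by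
    rw [ha, hc, div_add_div _ _ (ne_of_gt hdu0) (ne_of_gt hdv0)]
    set w : ℝ := A u v with hwdef
    have key : w / (2*du*dv) ≤ (dv + du) / (4 * (du*dv)) := by
      rw [div_le_div_iff₀ (by positivity) (by positivity)]
      nlinarith [mul_pos hdu0 hdv0]
    have e1 : du*(1/(2*du))^2 = 1/(4*du) := by field_simp; ring
    have e2 : dv*(1/(2*dv))^2 = 1/(4*dv) := by field_simp; ring
    have e3 : 2*w*((1/(2*du))*(1/(2*dv))) = w / (2*du*dv) := by field_simp
    rw [e1, e2, e3]
    have e4 : 2*(1/(2*du) + 1/(2*dv)) - (1/(4*du) + 1/(4*dv) + w/(2*du*dv))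
        = (1/2)*((du+dv)/(du*dv)) + ((dv+du)/(4*(du*dv)) - w/(2*du*dv)) := by
      field_simp; ring
    rw [e4]
    have e5 : (1*dv + du*1) = du + dv := by ring
    rw [e5]
    linarith [key]
  calc (1/2)*(1/du + 1/dv)
      ≤ 2*(aa + cc) - (du * aa ^ 2 + dv * cc ^ 2 + 2 * A u v * (aa * cc)) := harith
    _ ≤ b ⬝ᵥ y := by linarith [h0]
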